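/- Let A = S₁ C S₂⁻¹ = S₁' C' S₂'⁻¹, where S₁, S₂, S₁', S₂' are 3×3 diagonal matrices with positive diagonal entries and C, C' are 3×3 real matrices with C Cᵀ = I₃ and C' C'ᵀ = I₃. If the kernel of the matrix A₀ is one-dimensional, then there exists a real number λ > 0 such that S₁' = λ S₁, S₂' = λ S₂, and C' = C. (In other words, when rank A₀ = 2, the extrinsic rotation is uniquely determined and the six scale factors are determined up to a common global scale.) -/

import Mathlib

/-- `A₀`: the matrix with `(A₀)_{1j} = a_{1j} a_{2j}`, `(A₀)_{2j} = a_{2j} a_{3j}`,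
`(A₀)_{3j} = a_{3j} a_{1j}` (cyclic products of consecutive rows). -/
def matA0 (A : Matrix (Fin 3) (Fin 3) ℝ) : Matrix (Fin 3) (Fin 3) ℝ :=
  Matrix.of fun i j => A i j * A (i + 1) j

/-- Auxiliary: for `A = S₁ C S₂⁻¹` entrywise, the vector of squares of `s₂`
lies in the kernel of `matA0 A`. -/
lemma aux_ker (s₁ s₂ : Fin 3 → ℝ) (hs₂ : ∀ j, s₂ j ≠ 0)
    (C : Matrix (Fin 3) (Fin 3) ℝ) (hC : C * C.transpose = 1)
    (A : Matrix (Fin 3) (Fin 3) ℝ)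
    (hAe : ∀ i j, A i j = s₁ i * C i j * (s₂ j)⁻¹) :
    (matA0 A).mulVec (fun j => (s₂ j) ^ 2) = 0 := by
  funext i
  have hne : i ≠ i + 1 := by revert i; decide
  have hCo : ∑ j, C i j * C (i + 1) j = 0 := by
    have h := congrFun (congrFun hC i) (i + 1)
    simpa [Matrix.mul_apply, Matrix.one_apply, hne] using h
  have hterm : ∀ j, A i j * A (i + 1) j * (s₂ j) ^ 2
      = (s₁ i * s₁ (i + 1)) * (C i j * C (i + 1) j) := by
    intro j
    rw [hAe, hAe]
    field_simp [hs₂ j]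
  simp only [Matrix.mulVec, dotProduct, matA0, Matrix.of_apply, Pi.zero_apply]
  calc ∑ j, A i j * A (i + 1) j * (s₂ j) ^ 2
      = ∑ j, (s₁ i * s₁ (i + 1)) * (C i j * C (i + 1) j) := by
        exact Finset.sum_congr rfl fun j _ => hterm j
    _ = (s₁ i * s₁ (i + 1)) * ∑ j, C i j * C (i + 1) j := by rw [Finset.mul_sum]
    _ = 0 := by rw [hCo, mul_zero]

/-- if `A = S₁ C S₂⁻¹ = S₁' C' S₂'⁻¹` with positive diagonal scale matrices
and `C Cᵀ = C' C'ᵀ = I₃`, and the kernel of `A₀` is one-dimensional, then there is a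
`λ > 0` with `S₁' = λ S₁`, `S₂' = λ S₂` and `C' = C`. -/
theorem stmt8 (s₁ s₂ s₁' s₂' : Fin 3 → ℝ)
    (h₁ : ∀ i, 0 < s₁ i) (h₂ : ∀ i, 0 < s₂ i)
    (h₁' : ∀ i, 0 < s₁' i) (h₂' : ∀ i, 0 < s₂' i)
    (C C' : Matrix (Fin 3) (Fin 3) ℝ)
    (hC : C * C.transpose = 1) (hC' : C' * C'.transpose = 1)
    (A : Matrix (Fin 3) (Fin 3) ℝ)
    (hA : A = Matrix.diagonal s₁ * C * (Matrix.diagonal s₂)⁻¹)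
    (hA' : A = Matrix.diagonal s₁' * C' * (Matrix.diagonal s₂')⁻¹)
    (hker : Module.finrank ℝ (LinearMap.ker (matA0 A).mulVecLin) = 1) :
    ∃ lam : ℝ, 0 < lam ∧
      Matrix.diagonal s₁' = lam • Matrix.diagonal s₁ ∧
      Matrix.diagonal s₂' = lam • Matrix.diagonal s₂ ∧
      C' = C := by
  have hs₂ : ∀ j, s₂ j ≠ 0 := fun j => (h₂ j).ne'
  have hs₂' : ∀ j, s₂' j ≠ 0 := fun j => (h₂' j).ne'
  have hs₁ : ∀ i, s₁ i ≠ 0 := fun i => (h₁ i).ne'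
  have hs₁' : ∀ i, s₁' i ≠ 0 := fun i => (h₁' i).ne'
  -- entrywise formulas for A
  have hdinv : ∀ (s : Fin 3 → ℝ), (∀ j, s j ≠ 0) →
      (Matrix.diagonal s)⁻¹ = Matrix.diagonal fun j => (s j)⁻¹ := by
    intro s hs
    apply Matrix.inv_eq_right_inv
    have he : (fun j => s j * (s j)⁻¹) = fun _ => (1 : ℝ) :=
      funext fun j => mul_inv_cancel₀ (hs j)
    rw [Matrix.diagonal_mul_diagonal, he, Matrix.diagonal_one]
  have hAe : ∀ i j, A i j = s₁ i * C i j * (s₂ j)⁻¹ := by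
    intro i j
    rw [hA, hdinv s₂ hs₂]
    simp [Matrix.mul_diagonal, Matrix.diagonal_mul]
  have hAe' : ∀ i j, A i j = s₁' i * C' i j * (s₂' j)⁻¹ := by
    intro i j
    rw [hA', hdinv s₂' hs₂']
    simp [Matrix.mul_diagonal, Matrix.diagonal_mul]
  -- both square vectors are in the kernel
  set v : Fin 3 → ℝ := fun j => (s₂ j) ^ 2 with hv_def
  set v' : Fin 3 → ℝ := fun j => (s₂' j) ^ 2 with hv'_def
  have hv : v ∈ LinearMap.ker (matA0 A).mulVecLin := by
    rw [LinearMap.mem_ker, Matrix.mulVecLin_apply]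
    exact aux_ker s₁ s₂ hs₂ C hC A hAe
  have hv' : v' ∈ LinearMap.ker (matA0 A).mulVecLin := by
    rw [LinearMap.mem_ker, Matrix.mulVecLin_apply]
    exact aux_ker s₁' s₂' hs₂' C' hC' A hAe'
  have hvne : v ≠ 0 := by
    intro h
    have := congrFun h 0
    simp [hv_def] at this
    exact hs₂ 0 this
  -- the kernel equals the span of v
  have hspan : Submodule.span ℝ {v} = LinearMap.ker (matA0 A).mulVecLin := by
    apply Submodule.eq_of_le_of_finrank_le
    · rwa [Submodule.span_singleton_le_iff_mem]
    · rw [hker, finrank_span_singleton hvne]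
  have hv'mem : v' ∈ Submodule.span ℝ {v} := hspan ▸ hv'
  obtain ⟨μ, hμ⟩ := Submodule.mem_span_singleton.mp hv'mem
  have hμ0 : 0 < μ := by
    have h0 := congrFun hμ 0
    simp only [Pi.smul_apply, smul_eq_mul, hv_def, hv'_def] at h0
    nlinarith [h₂ 0, h₂' 0, sq_nonneg (s₂ 0), sq_nonneg (s₂' 0)]
  set lam : ℝ := Real.sqrt μ with hlam_def
  have hlam0 : 0 < lam := Real.sqrt_pos.mpr hμ0
  have hlamsq : lam ^ 2 = μ := Real.sq_sqrt hμ0.le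
  -- s₂' = lam • s₂
  have hs₂eq : ∀ j, s₂' j = lam * s₂ j := by
    intro j
    have h0 := congrFun hμ j
    simp only [Pi.smul_apply, smul_eq_mul, hv_def, hv'_def] at h0
    have hsq : (s₂' j) ^ 2 = (lam * s₂ j) ^ 2 := by
      rw [mul_pow, hlamsq]; linarith
    exact (sq_eq_sq₀ (h₂' j).le (mul_nonneg hlam0.le (h₂ j).le)).mp hsq
  -- entrywise relation between C' and C
  have hC'e : ∀ i j, C' i j = (lam * s₁ i / s₁' i) * C i j := by
    intro i j
    have h0 := (hAe i j).symm.trans (hAe' i j)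
    rw [hs₂eq j] at h0
    field_simp [hs₂ j, hlam0.ne'] at h0
    have h1 : s₁ i * C i j * lam = s₁' i * C' i j :=
      mul_right_cancel₀ (hs₂ j) (by linear_combination s₂ j * h0)
    field_simp [hs₁' i]
    linear_combination -h1
  -- row normalization of C and C'
  have hCo : ∀ i, ∑ j, C i j * C i j = 1 := by
    intro i
    have h := congrFun (congrFun hC i) i
    simpa [Matrix.mul_apply, Matrix.one_apply] using h
  have hCo' : ∀ i, ∑ j, C' i j * C' i j = 1 := by
    intro i
    have h := congrFun (congrFun hC' i) i
    simpa [Matrix.mul_apply, Matrix.one_apply] using h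
  -- deduce s₁' = lam • s₁
  have hs₁eq : ∀ i, s₁' i = lam * s₁ i := by
    intro i
    have h1 : ∑ j, C' i j * C' i j = (lam * s₁ i / s₁' i) ^ 2 * ∑ j, C i j * C i j := by
      rw [Finset.mul_sum]
      exact Finset.sum_congr rfl fun j _ => by rw [hC'e i j]; ring
    rw [hCo i, hCo' i, mul_one] at h1
    have hsq : (s₁' i) ^ 2 = (lam * s₁ i) ^ 2 := by
      field_simp [hs₁' i] at h1
      linear_combination h1
    exact (sq_eq_sq₀ (h₁' i).le (mul_nonneg hlam0.le (h₁ i).le)).mp hsq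
  have hC'eq : C' = C := by
    ext i j
    rw [hC'e i j, hs₁eq i, div_self (mul_pos hlam0 (h₁ i)).ne', one_mul]
  refine ⟨lam, hlam0, ?_, ?_, hC'eq⟩
  · ext i j
    rcases eq_or_ne i j with rfl | h
    · simp [Matrix.diagonal, hs₁eq i]
    · simp [Matrix.diagonal_apply_ne _ h]
  · ext i j
    rcases eq_or_ne i j with rfl | h
    · simp [Matrix.diagonal, hs₂eq i]
    · simp [Matrix.diagonal_apply_ne _ h]
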